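/- For α ∈ (1,2) and n = 3, a strategy profile s is a strong equilibrium of the network creation game if and only if s is rational and G(s) is the 3-star (path on 3 vertices). -/

import Mathlib

open SimpleGraph ENNReal Finset

/-- A strategy profile: each player chooses a set of other players. -/
abbrev Profile (n : ℕ) := Fin n → Finset (Fin n)

/-- Validity: no player buys an edge to herself. -/
def Valid {n : ℕ} (s : Profile n) : Prop := ∀ i, i ∉ s i

/-- The graph formed by a strategy profile: `{i,j}` is an edge iff `j ∈ s i` or `i ∈ s j`. -/
def NCGraph {n : ℕ} (s : Profile n) : SimpleGraph (Fin n) :=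
  SimpleGraph.fromRel (fun i j => j ∈ s i)

instance {n : ℕ} (s : Profile n) : DecidableRel (NCGraph s).Adj := fun i j =>
  decidable_of_iff (i ≠ j ∧ (j ∈ s i ∨ i ∈ s j))
    (SimpleGraph.fromRel_adj (fun a b => b ∈ s a) i j).symm

/-- Distance cost of player `i`: sum of (extended) distances to all players. -/
noncomputable def dCost {n : ℕ} (s : Profile n) (i : Fin n) : ℝ≥0∞ :=
  ∑ j, ((NCGraph s).edist i j : ℝ≥0∞)

/-- Total cost of player `i` in the network creation game with parameter `α`. -/
noncomputable def cost {n : ℕ} (α : ℝ) (s : Profile n) (i : Fin n) : ℝ≥0∞ :=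
  ENNReal.ofReal α * (s i).card + dCost s i

/-- Social cost: sum of all players' costs. -/
noncomputable def socialCost {n : ℕ} (α : ℝ) (s : Profile n) : ℝ≥0∞ :=
  ∑ i, cost α s i

/-- A profile is rational if no edge is bought by both of its endpoints. -/
def Rational {n : ℕ} (s : Profile n) : Prop := ∀ i j, j ∈ s i → i ∉ s j

/-- Pure Nash equilibrium. -/
def IsNashEq {n : ℕ} (α : ℝ) (s : Profile n) : Prop :=
  ∀ (i : Fin n) (t : Finset (Fin n)), i ∉ t →
    cost α s i ≤ cost α (Function.update s i t) i

/-- Strong equilibrium: no nonempty coalition has a joint deviation strictly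
decreasing every member's cost. -/
def IsStrongEq {n : ℕ} (α : ℝ) (s : Profile n) : Prop :=
  ∀ (K : Finset (Fin n)) (s' : Profile n), K.Nonempty → Valid s' →
    (∀ i ∉ K, s' i = s i) → ∃ i ∈ K, cost α s i ≤ cost α s' i

/-- A star graph: one center adjacent to all other vertices, and no other edges. -/
def IsStar {V : Type*} (G : SimpleGraph V) : Prop :=
  ∃ c : V, ∀ i j : V, G.Adj i j ↔ i ≠ j ∧ (i = c ∨ j = c)
open SimpleGraph ENNReal Finset

/-- computable distance for 3-vertex NC graphs -/
def mdist (s : Profile 3) (i j : Fin 3) : ℕ∞ :=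
  if i = j then 0
  else if (NCGraph s).Adj i j then 1
  else if ∃ k, (NCGraph s).Adj i k ∧ (NCGraph s).Adj k j then 2
  else ⊤

lemma edist_eq_mdist (s : Profile 3) (i j : Fin 3) :
    (NCGraph s).edist i j = mdist s i j := by
  unfold mdist
  split_ifs with h1 h2 h3
  · subst h1; exact edist_self
  · exact edist_eq_one_iff_adj.mpr h2
  · obtain ⟨k, hik, hkj⟩ := h3
    refine le_antisymm ?_ ?_
    · have h := SimpleGraph.Walk.edist_le (SimpleGraph.Walk.cons hik (SimpleGraph.Walk.cons hkj SimpleGraph.Walk.nil))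
      simpa using h
    · have h0 : (NCGraph s).edist i j ≠ 0 := by
        simp [SimpleGraph.edist_eq_zero_iff, h1]
      have h1' : (NCGraph s).edist i j ≠ 1 := by
        simp [SimpleGraph.edist_eq_one_iff_adj, h2]
      rcases h : (NCGraph s).edist i j with _ | n
      · exact le_top
      · rw [h] at h0 h1'
        have hn : 2 ≤ n := by
          rcases n with _ | _ | n
          · exact absurd rfl h0
          · exact absurd rfl h1'
          · omega
        have : (some n : ℕ∞) = (n : ℕ∞) := congrFun ENat.some_eq_coe n
        rw [this]
        exact_mod_cast hn
  · apply SimpleGraph.edist_eq_top_of_not_reachable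
    rintro ⟨w⟩
    have hp := w.toPath.2.length_lt
    generalize hq : (w.toPath : SimpleGraph.Walk (NCGraph s) i j) = q at hp
    clear hq
    cases q with
    | nil => exact h1 rfl
    | cons hadj q' =>
      cases q' with
      | nil => exact h2 hadj
      | cons hadj' q'' =>
        cases q'' with
        | nil => exact h3 ⟨_, hadj, hadj'⟩
        | cons _ _ => simp [SimpleGraph.Walk.length_cons] at hp; omega

def Dc (s : Profile 3) (i : Fin 3) : ℕ∞ := ∑ j, mdist s i j

lemma dCost_eq (s : Profile 3) (i : Fin 3) : dCost s i = (Dc s i : ℝ≥0∞) := by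
  unfold dCost Dc
  rw [show ((↑(∑ j, mdist s i j) : ℝ≥0∞)) = ENat.toENNRealRingHom (∑ j, mdist s i j) from rfl,
    map_sum]
  simp [edist_eq_mdist, ENat.toENNRealRingHom_apply]

lemma cost_eq (α : ℝ) (s : Profile 3) (i : Fin 3) :
    cost α s i = ENNReal.ofReal α * (s i).card + (Dc s i : ℝ≥0∞) := by
  rw [cost, dCost_eq]

/-- sufficient condition (for all `α ∈ [1,2]`) for `α k₁ + d₁ ≤ α k₂ + d₂`. -/
def Ble (k1 : ℕ) (d1 : ℕ∞) (k2 : ℕ) (d2 : ℕ∞) : Prop :=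
  (k1 : ℕ∞) + d1 ≤ (k2 : ℕ∞) + d2 ∧ (2 * k1 : ℕ) + d1 ≤ (2 * k2 : ℕ) + d2

/-- sufficient condition (for all `α ∈ (1,2)`) for `α k₁ + d₁ < α k₂ + d₂`. -/
def Blt (k1 : ℕ) (d1 : ℕ∞) (k2 : ℕ) (d2 : ℕ∞) : Prop :=
  d1 ≠ ⊤ ∧ (d2 = ⊤ ∨ (Ble k1 d1 k2 d2 ∧ (k1 = k2 → d1 < d2)))

instance (k1 : ℕ) (d1 : ℕ∞) (k2 : ℕ) (d2 : ℕ∞) : Decidable (Ble k1 d1 k2 d2) := by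
  unfold Ble; infer_instance

instance (k1 : ℕ) (d1 : ℕ∞) (k2 : ℕ) (d2 : ℕ∞) : Decidable (Blt k1 d1 k2 d2) := by
  unfold Blt; infer_instance

lemma cast_helper (β : ℝ) (hβ : 0 ≤ β) (k : ℕ) (n : ℕ) :
    ENNReal.ofReal β * (k : ℝ≥0∞) + ((n : ℕ∞) : ℝ≥0∞) = ENNReal.ofReal (β * k + n) := by
  rw [ENat.toENNReal_coe]
  rw [ENNReal.ofReal_add (by positivity) (by positivity), ENNReal.ofReal_mul hβ,
    ENNReal.ofReal_natCast, ENNReal.ofReal_natCast]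

lemma Ble_sound {α : ℝ} (hα1 : 1 ≤ α) (hα2 : α ≤ 2) {k1 k2 : ℕ} {d1 d2 : ℕ∞}
    (h : Ble k1 d1 k2 d2) :
    ENNReal.ofReal α * k1 + (d1 : ℝ≥0∞) ≤ ENNReal.ofReal α * k2 + (d2 : ℝ≥0∞) := by
  obtain ⟨h1, h2⟩ := h
  induction d2 using ENat.recTopCoe with
  | top => simp
  | coe n2 =>
    have hd1 : d1 ≠ ⊤ := by
      intro hd; rw [hd, add_top, top_le_iff, ← Nat.cast_add] at h1
      exact ENat.coe_ne_top _ h1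
    induction d1 using ENat.recTopCoe with
    | top => exact absurd rfl hd1
    | coe n1 =>
      have e1 : k1 + n1 ≤ k2 + n2 := by exact_mod_cast h1
      have e2 : 2 * k1 + n1 ≤ 2 * k2 + n2 := by exact_mod_cast h2
      rw [cast_helper α (by linarith) k1 n1, cast_helper α (by linarith) k2 n2]
      apply ENNReal.ofReal_le_ofReal
      have c1 : (k1 : ℝ) + n1 ≤ (k2 : ℝ) + n2 := by exact_mod_cast e1
      have c2 : 2 * (k1 : ℝ) + n1 ≤ 2 * (k2 : ℝ) + n2 := by exact_mod_cast e2
      nlinarith [mul_nonneg (by linarith : (0:ℝ) ≤ 2 - α) (by linarith : (0:ℝ) ≤ (k2:ℝ) + n2 - k1 - n1),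
        mul_nonneg (by linarith : (0:ℝ) ≤ α - 1) (by linarith : (0:ℝ) ≤ 2 * (k2:ℝ) + n2 - (2 * k1 + n1))]

lemma Blt_sound {α : ℝ} (hα1 : 1 < α) (hα2 : α < 2) {k1 k2 : ℕ} {d1 d2 : ℕ∞}
    (h : Blt k1 d1 k2 d2) :
    ENNReal.ofReal α * k1 + (d1 : ℝ≥0∞) < ENNReal.ofReal α * k2 + (d2 : ℝ≥0∞) := by
  obtain ⟨hd1, h⟩ := h
  induction d1 using ENat.recTopCoe with
  | top => exact absurd rfl hd1
  | coe n1 =>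
    rcases h with h | ⟨⟨h1, h2⟩, h3⟩
    · rw [h]
      rw [cast_helper α (by linarith) k1 n1]
      simp only [ENat.toENNReal_top]
      rw [add_top]
      exact ENNReal.ofReal_lt_top
    · induction d2 using ENat.recTopCoe with
      | top =>
        rw [cast_helper α (by linarith) k1 n1]
        simp only [ENat.toENNReal_top]
        rw [add_top]
        exact ENNReal.ofReal_lt_top
      | coe n2 =>
        have e1 : k1 + n1 ≤ k2 + n2 := by exact_mod_cast h1
        have e2 : 2 * k1 + n1 ≤ 2 * k2 + n2 := by exact_mod_cast h2
        rw [cast_helper α (by linarith) k1 n1, cast_helper α (by linarith) k2 n2]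
        rw [ENNReal.ofReal_lt_ofReal_iff_of_nonneg (by positivity)]
        have c1 : (k1 : ℝ) + n1 ≤ (k2 : ℝ) + n2 := by exact_mod_cast e1
        have c2 : 2 * (k1 : ℝ) + n1 ≤ 2 * (k2 : ℝ) + n2 := by exact_mod_cast e2
        rcases lt_trichotomy k1 k2 with hk | hk | hk
        · have hk' : (k1 : ℝ) + 1 ≤ k2 := by exact_mod_cast hk
          nlinarith [mul_pos (by linarith : (0:ℝ) < α - 1) (by linarith : (0:ℝ) < (k2:ℝ) - k1)]
        · subst hk
          have : n1 < n2 := by exact_mod_cast (h3 rfl)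
          have : (n1 : ℝ) < n2 := by exact_mod_cast this
          linarith
        · have hk' : (k2 : ℝ) + 1 ≤ k1 := by exact_mod_cast hk
          nlinarith [mul_pos (by linarith : (0:ℝ) < 2 - α) (by linarith : (0:ℝ) < (k1:ℝ) - k2)]

def Star' (s : Profile 3) : Prop :=
  ∃ c : Fin 3, ∀ i j : Fin 3, (NCGraph s).Adj i j ↔ i ≠ j ∧ (i = c ∨ j = c)

instance (s : Profile 3) : Decidable (Star' s) := by unfold Star'; infer_instance
instance {n : ℕ} (s : Profile n) : Decidable (Valid s) := by unfold Valid; infer_instance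
instance {n : ℕ} (s : Profile n) : Decidable (Rational s) := by unfold Rational; infer_instance

def mk (a b c : Finset (Fin 3)) : Profile 3 := ![a, b, c]

lemma mk_eq (s : Profile 3) : s = mk (s 0) (s 1) (s 2) := by
  funext i; fin_cases i <;> rfl

def PA : Prop := ∀ a b c : Finset (Fin 3), Valid (mk a b c) → Rational (mk a b c) →
    Star' (mk a b c) →
    ∀ K : Finset (Fin 3), ∀ a' b' c' : Finset (Fin 3), K.Nonempty → Valid (mk a' b' c') →
      (∀ i, i ∉ K → mk a' b' c' i = mk a b c i) →
      ∃ i ∈ K, Ble ((mk a b c) i).card (Dc (mk a b c) i) ((mk a' b' c') i).card (Dc (mk a' b' c') i)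

def PB : Prop := ∀ a b c : Finset (Fin 3), Valid (mk a b c) →
    ¬(Rational (mk a b c) ∧ Star' (mk a b c)) →
    ∃ K : Finset (Fin 3), K.Nonempty ∧ ∃ a' b' c' : Finset (Fin 3), Valid (mk a' b' c') ∧
      (∀ i, i ∉ K → mk a' b' c' i = mk a b c i) ∧
      ∀ i ∈ K, Blt ((mk a' b' c') i).card (Dc (mk a' b' c') i) ((mk a b c) i).card (Dc (mk a b c) i)

set_option synthInstance.maxSize 1000 in
set_option synthInstance.maxHeartbeats 400000 in
instance : Decidable PA := by unfold PA; infer_instance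
instance : Decidable PB := by unfold PB; infer_instance

set_option maxHeartbeats 4000000 in
set_option maxRecDepth 100000 in
lemma lemPA : PA := by decide

set_option maxHeartbeats 4000000 in
set_option maxRecDepth 100000 in
lemma lemPB : PB := by decide

lemma cost_le_of_Ble {α : ℝ} (hα1 : 1 < α) (hα2 : α < 2) {s s' : Profile 3} {i : Fin 3}
    (h : Ble (s i).card (Dc s i) (s' i).card (Dc s' i)) :
    cost α s i ≤ cost α s' i := by
  rw [cost_eq, cost_eq]; exact Ble_sound hα1.le hα2.le h

lemma cost_lt_of_Blt {α : ℝ} (hα1 : 1 < α) (hα2 : α < 2) {s s' : Profile 3} {i : Fin 3}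
    (h : Blt (s' i).card (Dc s' i) (s i).card (Dc s i)) :
    cost α s' i < cost α s i := by
  rw [cost_eq, cost_eq]; exact Blt_sound hα1 hα2 h

/-- For `α ∈ (1,2)` and `n = 3`: strong equilibria are exactly the rational
profiles forming the `3`-star. -/
theorem stmt18 (α : ℝ) (hα1 : 1 < α) (hα2 : α < 2)
    (s : Profile 3) (hv : Valid s) :
    IsStrongEq α s ↔ Rational s ∧ IsStar (NCGraph s) := by
  have hs : mk (s 0) (s 1) (s 2) = s := (mk_eq s).symm
  constructor
  · intro hse
    by_contra hns
    have hns' : ¬(Rational (mk (s 0) (s 1) (s 2)) ∧ Star' (mk (s 0) (s 1) (s 2))) := by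
      rw [hs]; exact fun h => hns ⟨h.1, h.2⟩
    obtain ⟨K, hKne, a', b', c', hval', hagree, hblt⟩ :=
      lemPB (s 0) (s 1) (s 2) (by rw [hs]; exact hv) hns'
    rw [hs] at hagree hblt
    obtain ⟨i, hiK, hle⟩ := hse K (mk a' b' c') hKne hval' (fun i hi => hagree i hi)
    exact absurd hle (not_le.mpr (cost_lt_of_Blt hα1 hα2 (hblt i hiK)))
  · rintro ⟨hr, hstar⟩
    intro K s' hKne hval' hagree
    have hs' : mk (s' 0) (s' 1) (s' 2) = s' := (mk_eq s').symm
    obtain ⟨i, hiK, hble⟩ :=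
      lemPA (s 0) (s 1) (s 2) (by rw [hs]; exact hv) (by rw [hs]; exact hr)
        (by rw [hs]; exact hstar) K (s' 0) (s' 1) (s' 2) hKne (by rw [hs']; exact hval')
        (by rw [hs, hs']; exact hagree)
    rw [hs, hs'] at hble
    exact ⟨i, hiK, cost_le_of_Ble hα1 hα2 hble⟩
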